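/- Let G be a simple n-vertex graph with no subgraph isomorphic to K_q, and let u be a vertex of G with degree at most the average degree of G. Then there exists a simple graph G' on n−1 vertices, obtained from G by splitting off pairs of edges incident with u and deleting u (possibly first deleting some edges at u), such that the average degree of G' is at least d̄(G) − (q−2)/(n−1). -/

import Mathlib

open SimpleGraph

/-- The average degree of a graph: twice the number of edges divided by the number of
vertices. -/
noncomputable def avgDeg {W : Type*} [Fintype W] (G : SimpleGraph W) : ℝ :=
  2 * G.edgeSet.ncard / Fintype.card W

/-- Let `G` be a simple `n`-vertex graph with no subgraph isomorphic to `K_q`, and let `u`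
be a vertex of degree at most the average degree of `G`.  Then there is a simple graph `G'`
on the remaining `n - 1` vertices, obtained from `G` by splitting off pairs of edges
incident with `u` (adding a matching `M` of non-edges inside the neighbourhood of `u`),
deleting the remaining edges at `u` and deleting `u`, whose average degree is at least
`avgDeg G - (q-2)/(n-1)`. -/
theorem stmt_2 {V : Type*} [Fintype V] [DecidableEq V] (G : SimpleGraph V) (q : ℕ)
    (hq : G.CliqueFree q) (u : V)
    (hu : ((G.neighborSet u).ncard : ℝ) ≤ avgDeg G) :
    ∃ (M : Set (Sym2 V)) (G' : SimpleGraph {v : V // v ≠ u}),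
      (∀ e ∈ M, ¬ e.IsDiag ∧ (∀ x ∈ e, G.Adj u x) ∧ e ∉ G.edgeSet) ∧
      (M.Pairwise fun e f => ∀ x, x ∈ e → x ∉ f) ∧
      (∀ x y : {v : V // v ≠ u}, G'.Adj x y ↔ (G.Adj x.val y.val ∨ s(x.val, y.val) ∈ M)) ∧
      avgDeg G - ((q : ℝ) - 2) / ((Fintype.card V : ℝ) - 1) ≤ avgDeg G' := by
  classical
  -- a maximal "matching" of non-edges inside the neighbourhood of u
  set P : Finset (Sym2 V) → Prop := fun s =>
    (∀ e ∈ s, ¬ e.IsDiag ∧ (∀ x ∈ e, G.Adj u x) ∧ e ∉ G.edgeSet) ∧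
    ((s : Set (Sym2 V)).Pairwise fun e f => ∀ x, x ∈ e → x ∉ f) with hPdef
  have hP0 : P ∅ := ⟨by simp, by simp⟩
  obtain ⟨M, hMmem, hMmax⟩ :=
    Finset.exists_max_image (Finset.univ.filter P) Finset.card
      ⟨∅, Finset.mem_filter.2 ⟨Finset.mem_univ _, hP0⟩⟩
  rw [Finset.mem_filter] at hMmem
  obtain ⟨hM1, hM2⟩ : P M := hMmem.2
  have hMmax' : ∀ s : Finset (Sym2 V), P s → s.card ≤ M.card := fun s hs =>
    hMmax s (Finset.mem_filter.2 ⟨Finset.mem_univ _, hs⟩)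
  -- uncovered neighbours
  set S : Finset V := (G.neighborFinset u).filter (fun x => ∀ e ∈ M, x ∉ e) with hSdef
  have hSadj : ∀ x ∈ S, G.Adj u x := by
    intro x hx
    exact (G.mem_neighborFinset u x).1 (Finset.mem_filter.1 hx).1
  have hSunc : ∀ x ∈ S, ∀ e ∈ M, x ∉ e := fun x hx => (Finset.mem_filter.1 hx).2
  -- S is a clique
  have hSpair : ∀ x ∈ S, ∀ y ∈ S, x ≠ y → G.Adj x y := by
    intro x hx y hy hxy
    by_contra hne
    have hnotmem : s(x, y) ∉ M := fun h => hSunc x hx _ h (Sym2.mem_mk_left x y)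
    have hP' : P (insert s(x, y) M) := by
      constructor
      · intro e he
        rcases Finset.mem_insert.1 he with rfl | he
        · refine ⟨by simpa [Sym2.mk_isDiag_iff] using hxy, ?_, ?_⟩
          · intro z hz
            rcases Sym2.mem_iff.1 hz with rfl | rfl
            · exact hSadj _ hx
            · exact hSadj _ hy
          · intro h
            exact hne (G.mem_edgeSet.1 h)
        · exact hM1 e he
      · rw [Finset.coe_insert]
        refine Set.Pairwise.insert hM2 ?_
        intro f hf _
        constructor
        · intro z hz
          rcases Sym2.mem_iff.1 hz with rfl | rfl
          · exact hSunc _ hx _ hf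
          · exact hSunc _ hy _ hf
        · intro z hz hz'
          rcases Sym2.mem_iff.1 hz' with rfl | rfl
          · exact hSunc _ hx _ hf hz
          · exact hSunc _ hy _ hf hz
    have := hMmax' _ hP'
    rw [Finset.card_insert_of_notMem hnotmem] at this
    omega
  have huS : u ∉ S := by
    intro h
    exact G.irrefl (hSadj u h)
  -- clique bound : S.card + 2 ≤ q
  have hSq : S.card + 2 ≤ q := by
    by_contra h
    push_neg at h
    have hql : q ≤ (insert u S).card := by
      rw [Finset.card_insert_of_notMem huS]; omega
    obtain ⟨t, ht, htc⟩ := Finset.exists_subset_card_eq hql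
    refine hq t ⟨?_, htc⟩
    have hclique : G.IsClique (insert u (S : Set V)) := by
      intro a ha b hb hab
      simp only [Set.mem_insert_iff, Finset.mem_coe] at ha hb
      rcases ha with rfl | ha
      · rcases hb with rfl | hb
        · exact absurd rfl hab
        · exact hSadj _ hb
      · rcases hb with rfl | hb
        · exact (hSadj _ ha).symm
        · exact hSpair _ ha _ hb hab
    exact hclique.subset (by rw [← Finset.coe_insert]; exact Finset.coe_subset.2 ht)
  -- degree count: d = 2|M| + |S|
  set cov : Finset V := M.biUnion (fun e => Finset.univ.filter (· ∈ e)) with hcovdef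
  have hcovmem : ∀ x, x ∈ cov ↔ ∃ e ∈ M, x ∈ e := by
    intro x; simp [hcovdef]
  have hNsplit : G.neighborFinset u = S ∪ cov := by
    ext x
    constructor
    · intro hx
      by_cases h : ∃ e ∈ M, x ∈ e
      · exact Finset.mem_union_right _ ((hcovmem x).2 h)
      · push_neg at h
        exact Finset.mem_union_left _ (Finset.mem_filter.2 ⟨hx, h⟩)
    · intro hx
      rcases Finset.mem_union.1 hx with hx | hx
      · exact (Finset.mem_filter.1 hx).1
      · obtain ⟨e, he, hxe⟩ := (hcovmem x).1 hx
        exact (G.mem_neighborFinset u x).2 ((hM1 e he).2.1 x hxe)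
  have hdisjScov : Disjoint S cov := by
    rw [Finset.disjoint_left]
    intro x hx hx'
    obtain ⟨e, he, hxe⟩ := (hcovmem x).1 hx'
    exact hSunc x hx e he hxe
  have hcovcard : cov.card = 2 * M.card := by
    rw [hcovdef, Finset.card_biUnion]
    · rw [Finset.sum_congr rfl (fun e he => ?_), Finset.sum_const, smul_eq_mul, mul_comm]
      have hediag := (hM1 e he).1
      have : ∃ a b, e = s(a, b) := by
        induction e using Sym2.ind with | _ a b => exact ⟨a, b, rfl⟩
      obtain ⟨a, b, rfl⟩ := this
      have hab : a ≠ b := fun h => hediag (by simp [Sym2.mk_isDiag_iff, h])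
      have : Finset.univ.filter (· ∈ s(a, b)) = {a, b} := by
        ext z; simp [Sym2.mem_iff]
      rw [this, Finset.card_insert_of_notMem (by simpa using hab), Finset.card_singleton]
    · intro e he f hf hef
      simp only [Function.onFun]
      rw [Finset.disjoint_left]
      intro x hx hx'
      have hxe : x ∈ e := by simpa using hx
      have hxf : x ∈ f := by simpa using hx'
      exact hM2 he hf hef x hxe hxf
  have hdcount : G.degree u = 2 * M.card + S.card := by
    rw [← card_neighborFinset_eq_degree, hNsplit, Finset.card_union_of_disjoint hdisjScov,
      hcovcard]
    omega
  -- edge count for G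
  set A : Finset (Sym2 V) := G.edgeFinset.filter (fun e => u ∉ e) with hAdef
  have hmcount : G.edgeFinset.card = A.card + G.degree u := by
    have hsplit : G.edgeFinset = A ∪ G.edgeFinset.filter (fun e => u ∈ e) := by
      ext e
      simp only [hAdef, Finset.mem_union, Finset.mem_filter]
      tauto
    have hdisj : Disjoint A (G.edgeFinset.filter (fun e => u ∈ e)) := by
      rw [Finset.disjoint_left]
      intro e he he'
      exact (Finset.mem_filter.1 he).2 (Finset.mem_filter.1 he').2
    rw [← G.card_incidenceFinset_eq_degree u, incidenceFinset_eq_filter,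
      ← Finset.card_union_of_disjoint hdisj, ← hsplit]
  -- the new graph
  set G' : SimpleGraph {v : V // v ≠ u} :=
    { Adj := fun x y => G.Adj x.val y.val ∨ s(x.val, y.val) ∈ M
      symm := by
        constructor
        intro x y h
        rcases h with h | h
        · exact Or.inl h.symm
        · exact Or.inr (by rwa [Sym2.eq_swap])
      loopless := by
        constructor
        intro x h
        rcases h with h | h
        · exact G.irrefl h
        · exact (hM1 _ h).1 (by simp [Sym2.mk_isDiag_iff]) } with hG'def
  have hG'adj : ∀ x y : {v : V // v ≠ u},
      G'.Adj x y ↔ (G.Adj x.val y.val ∨ s(x.val, y.val) ∈ (M : Set (Sym2 V))) := by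
    intro x y; rw [hG'def]; simp [Finset.mem_coe]
  -- edge count for G'
  have hinj : Function.Injective (Sym2.map (Subtype.val : {v : V // v ≠ u} → V)) :=
    Sym2.map.injective Subtype.val_injective
  have himg : Sym2.map (Subtype.val : {v : V // v ≠ u} → V) '' G'.edgeSet
      = (A : Set (Sym2 V)) ∪ (M : Set (Sym2 V)) := by
    ext e
    constructor
    · rintro ⟨e', he', rfl⟩
      have : ∃ a b, e' = s(a, b) := by
        induction e' using Sym2.ind with | _ a b => exact ⟨a, b, rfl⟩
      obtain ⟨a, b, rfl⟩ := this
      rw [SimpleGraph.mem_edgeSet] at he'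
      rcases (hG'adj a b).1 he' with h | h
      · refine Or.inl ?_
        simp only [Finset.coe_filter, Set.mem_setOf_eq, hAdef]
        refine ⟨?_, ?_⟩
        · rw [Sym2.map_pair_eq, mem_edgeFinset, SimpleGraph.mem_edgeSet]; exact h
        · rw [Sym2.map_pair_eq, Sym2.mem_iff]
          push_neg
          exact ⟨Ne.symm a.2, Ne.symm b.2⟩
      · exact Or.inr (by rwa [Sym2.map_pair_eq])
    · intro he
      rcases he with he | he
      · rw [Finset.mem_coe, hAdef, Finset.mem_filter] at he
        obtain ⟨he1, he2⟩ := he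
        have : ∃ a b, e = s(a, b) := by
          induction e using Sym2.ind with | _ a b => exact ⟨a, b, rfl⟩
        obtain ⟨a, b, rfl⟩ := this
        rw [Sym2.mem_iff] at he2
        push_neg at he2
        refine ⟨s(⟨a, Ne.symm he2.1⟩, ⟨b, Ne.symm he2.2⟩), ?_, by rw [Sym2.map_pair_eq]⟩
        rw [SimpleGraph.mem_edgeSet]
        exact (hG'adj _ _).2 (Or.inl (G.mem_edgeSet.1 (mem_edgeFinset.1 he1)))
      · rw [Finset.mem_coe] at he
        have : ∃ a b, e = s(a, b) := by
          induction e using Sym2.ind with | _ a b => exact ⟨a, b, rfl⟩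
        obtain ⟨a, b, rfl⟩ := this
        have ha : G.Adj u a := (hM1 _ he).2.1 a (Sym2.mem_mk_left a b)
        have hb : G.Adj u b := (hM1 _ he).2.1 b (Sym2.mem_mk_right a b)
        refine ⟨s(⟨a, ha.ne'⟩, ⟨b, hb.ne'⟩), ?_, by rw [Sym2.map_pair_eq]⟩
        rw [SimpleGraph.mem_edgeSet]
        exact (hG'adj _ _).2 (Or.inr (by simpa using he))
  have hdisjAM : Disjoint (A : Set (Sym2 V)) (M : Set (Sym2 V)) := by
    rw [Set.disjoint_left]
    intro e he he'
    rw [Finset.mem_coe, hAdef, Finset.mem_filter, mem_edgeFinset] at he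
    exact (hM1 e (Finset.mem_coe.1 he')).2.2 he.1
  have hE' : G'.edgeSet.ncard = A.card + M.card := by
    rw [← Set.ncard_image_of_injective _ hinj, himg,
      Set.ncard_union_eq hdisjAM (A.finite_toSet) (M.finite_toSet),
      Set.ncard_coe_finset, Set.ncard_coe_finset]
  -- assemble
  refine ⟨(M : Set (Sym2 V)), G', ?_, ?_, hG'adj, ?_⟩
  · intro e he; exact hM1 e (Finset.mem_coe.1 he)
  · exact hM2
  -- arithmetic
  have hcV : 1 ≤ Fintype.card V := Fintype.card_pos_iff.2 ⟨u⟩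
  have hcardsub : Fintype.card {v : V // v ≠ u} = Fintype.card V - 1 := by
    simp [Fintype.card_subtype_compl, Fintype.card_subtype_eq]
  have hdcast : ((G.neighborSet u).ncard : ℝ) = (G.degree u : ℝ) := by
    congr 1
    rw [← card_neighborFinset_eq_degree, neighborFinset_def, ← Set.ncard_coe_finset,
      Set.coe_toFinset]
  have havgG : avgDeg G = 2 * (G.edgeFinset.card : ℝ) / (Fintype.card V : ℝ) := by
    rw [avgDeg, ← coe_edgeFinset, Set.ncard_coe_finset]
  have havgG' : avgDeg G' = 2 * ((A.card + M.card : ℕ) : ℝ)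
      / ((Fintype.card V : ℝ) - 1) := by
    rw [avgDeg, hE', hcardsub, Nat.cast_sub hcV, Nat.cast_one]
  rcases eq_or_lt_of_le hcV with hc1 | hc2
  · -- one vertex
    have hall : ∀ x : V, x = u := by
      intro x
      exact Fintype.card_le_one_iff.1 (le_of_eq hc1.symm) x u
    have hm0 : G.edgeFinset = ∅ := by
      apply Finset.eq_empty_of_forall_notMem
      intro e he
      have : ∃ a b, e = s(a, b) := by
        induction e using Sym2.ind with | _ a b => exact ⟨a, b, rfl⟩
      obtain ⟨a, b, rfl⟩ := this
      have hadj := G.mem_edgeSet.1 (mem_edgeFinset.1 he)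
      rw [hall a, hall b] at hadj
      exact G.irrefl hadj
    have hA0 : A.card = 0 := by
      have := hmcount
      rw [hm0] at this
      simp at this
      omega
    have hM0 : M.card = 0 := by
      have hdeg : G.degree u = 0 := by
        have := hmcount
        rw [hm0] at this
        simp at this
        omega
      omega
    rw [havgG, havgG', hm0, ← hc1, hA0, hM0]
    norm_num [div_zero]
  · -- at least two vertices
    have hn2 : (2 : ℝ) ≤ (Fintype.card V : ℝ) := by exact_mod_cast hc2
    have hn0 : (0 : ℝ) < (Fintype.card V : ℝ) := by linarith
    have hn1 : (0 : ℝ) < (Fintype.card V : ℝ) - 1 := by linarith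
    have hud : (G.degree u : ℝ) * (Fintype.card V : ℝ) ≤ 2 * (G.edgeFinset.card : ℝ) := by
      rw [hdcast, havgG] at hu
      calc (G.degree u : ℝ) * (Fintype.card V : ℝ)
          ≤ (2 * (G.edgeFinset.card : ℝ) / (Fintype.card V : ℝ)) * (Fintype.card V : ℝ) :=
            mul_le_mul_of_nonneg_right hu (le_of_lt hn0)
        _ = 2 * (G.edgeFinset.card : ℝ) := div_mul_cancel₀ _ (ne_of_gt hn0)
    have hmR : (G.edgeFinset.card : ℝ) = (A.card : ℝ) + (G.degree u : ℝ) := by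
      exact_mod_cast congrArg (Nat.cast : ℕ → ℝ) hmcount
    have hdR : (G.degree u : ℝ) = 2 * (M.card : ℝ) + (S.card : ℝ) := by
      exact_mod_cast congrArg (Nat.cast : ℕ → ℝ) hdcount
    have hsR : (S.card : ℝ) + 2 ≤ (q : ℝ) := by exact_mod_cast hSq
    rw [havgG, havgG', sub_le_iff_le_add, ← add_div, div_le_div_iff₀ hn0 hn1]
    push_cast
    nlinarith [hud, hmR, hdR, hsR, hn2, hn1, hn0]
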